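/- arXiv:1705.01535 — 8 statements merged into one kernel-verified Lean document; each statement's English description precedes it below -/
import Mathlib

section
/- Let (f, ≺) be a flow on an open graph (G, I, O) with |I| = |O| = n. Then the flow paths {P_i : i ∈ I} are pairwise disjoint and their union is all of V; equivalently, every vertex of V lies on exactly one flow path P_i. -/
/-- One step of iterating the flow function: allowed only from a non-output vertex. -/
def flowStep {V : Type*} (O : Set V) (f : V → V) : V → V → Prop :=
  fun u v => u ∉ O ∧ f u = v

/-- The flow path of a vertex `i`: the set {i, f(i), f(f(i)), …} obtained by iterating
`f` from `i` for as long as the current vertex lies in O^C. -/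
def flowPath {V : Type*} (O : Set V) (f : V → V) (i : V) : Set V :=
  {v | Relation.ReflTransGen (flowStep O f) i v}

/-- Let (f, ≺) be a flow on an open graph (G, I, O) with |I| = |O| = n.
Then the flow paths {P_i : i ∈ I} are pairwise disjoint and their union is all of V;
equivalently, every vertex of V lies on exactly one flow path P_i. -/
theorem flow_paths_partition {V : Type*} [Fintype V]
    (G : SimpleGraph V) (I O : Set V) (n : ℕ)
    (hI : I.ncard = n) (hO : O.ncard = n)
    (f : V → V) (prec : V → V → Prop)
    (hmap : ∀ v, v ∉ O → f v ∉ I)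
    (hirr : ∀ v, ¬ prec v v)
    (htrans : ∀ a b c, prec a b → prec b c → prec a c)
    (hF1 : ∀ i, i ∉ O → prec i (f i))
    (hF2 : ∀ i, i ∉ O → ∀ j, G.Adj (f i) j → j = i ∨ prec i j)
    (hF3 : ∀ i, i ∉ O → G.Adj i (f i)) :
    ∀ v : V, ∃! i, i ∈ I ∧ v ∈ flowPath O f i := by
  -- injectivity of f on Oᶜ
  have hinj : ∀ u w, u ∉ O → w ∉ O → f u = f w → u = w := by
    intro u w hu hw hfe
    by_contra hne
    have h1 : w = u ∨ prec u w := by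
      apply hF2 u hu w
      rw [hfe]
      exact (hF3 w hw).symm
    have h2 : u = w ∨ prec w u := by
      apply hF2 w hw u
      rw [← hfe]
      exact (hF3 u hu).symm
    rcases h1 with h1 | h1
    · exact hne h1.symm
    rcases h2 with h2 | h2
    · exact hne h2
    exact hirr u (htrans u w u h1 h2)
  -- surjectivity onto Iᶜ
  have hsurj : ∀ v, v ∉ I → ∃ u, u ∉ O ∧ f u = v := by
    have himg : f '' Oᶜ ⊆ Iᶜ := by
      rintro x ⟨u, hu, rfl⟩
      exact hmap u hu
    have hcard : (Iᶜ : Set V).ncard ≤ (f '' Oᶜ).ncard := by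
      have h0 : (f '' Oᶜ).ncard = (Oᶜ : Set V).ncard :=
        Set.ncard_image_of_injOn (fun a ha b hb h => hinj a b ha hb h)
      have h1 := Set.ncard_add_ncard_compl I
      have h2 := Set.ncard_add_ncard_compl O
      omega
    have heq : f '' Oᶜ = Iᶜ :=
      Set.eq_of_subset_of_ncard_le himg hcard (Set.toFinite _)
    intro v hv
    have : v ∈ f '' Oᶜ := heq ▸ hv
    obtain ⟨u, hu, hfu⟩ := this
    exact ⟨u, hu, hfu⟩
  -- prec is well-founded
  have : IsTrans V prec := ⟨htrans⟩
  have : IsIrrefl V prec := ⟨hirr⟩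
  have hwf : WellFounded prec := Finite.wellFounded_of_trans_of_irrefl prec
  -- existence
  have hex : ∀ v : V, ∃ i, i ∈ I ∧ v ∈ flowPath O f i := by
    intro v
    induction v using WellFounded.induction hwf with
    | _ v ih =>
      by_cases hvI : v ∈ I
      · exact ⟨v, hvI, Relation.ReflTransGen.refl⟩
      · obtain ⟨u, hu, hfu⟩ := hsurj v hvI
        have hp : prec u v := hfu ▸ hF1 u hu
        obtain ⟨i, hiI, hpath⟩ := ih u hp
        exact ⟨i, hiI, hpath.tail ⟨hu, hfu⟩⟩
  -- uniqueness
  have huniq : ∀ v : V, ∀ i j, i ∈ I → j ∈ I →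
      Relation.ReflTransGen (flowStep O f) i v →
      Relation.ReflTransGen (flowStep O f) j v → i = j := by
    intro v
    induction v using WellFounded.induction hwf with
    | _ v ih =>
      intro i j hiI hjI hi hj
      rcases (Relation.ReflTransGen.cases_tail hi) with rfl | ⟨w, hiw, hwv⟩
      · rcases (Relation.ReflTransGen.cases_tail hj) with rfl | ⟨w, _, hwv⟩
        · rfl
        · exact absurd (hwv.2 ▸ hiI) (hmap w hwv.1)
      · rcases (Relation.ReflTransGen.cases_tail hj) with rfl | ⟨w', hjw, hwv'⟩
        · exact absurd (hwv.2 ▸ hjI) (hmap w hwv.1)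
        · have hww : w = w' := hinj w w' hwv.1 hwv'.1 (hwv.2.trans hwv'.2.symm)
          subst hww
          exact ih w (hwv.2 ▸ hF1 w hwv.1) i j hiI hjI hiw hjw
  intro v
  obtain ⟨i, hiI, hpath⟩ := hex v
  exact ⟨i, ⟨hiI, hpath⟩, fun j ⟨hjI, hjpath⟩ => huniq v j i hjI hiI hjpath hpath⟩
end

section
/- (Lemma 1, existence part.) Let (f, ≺) be a flow on an open graph (G, I, O) with |I| = |O| = n, let < be a measurement order, and let w ∈ O^C. Then for every input i ∈ I, the flow path P_i contains at least one member of Q_w, i.e., P_i ∩ Q_w ≠ ∅. -/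
/-- M_w: the qubits measured strictly before w. -/
def measuredSet {V : Type*} (O : Set V) (lt : V → V → Prop) (w : V) : Set V :=
  {v | v ∉ O ∧ lt v w}

/-- U_w: the unmeasured qubits other than w, i.e. V \ (M_w ∪ {w}). -/
def unmeasuredSet {V : Type*} (O : Set V) (lt : V → V → Prop) (w : V) : Set V :=
  (measuredSet O lt w ∪ {w})ᶜ

/-- Q_w = N_w ∪ I_w ∪ O_w, where N_w = N(w) ∩ U_w, I_w = I ∩ U_w and
O_w = {v ∈ U_w : N(v) ∩ M_w ≠ ∅}. -/
def requiredSet {V : Type*} (G : SimpleGraph V) (I O : Set V)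
    (lt : V → V → Prop) (w : V) : Set V :=
  (G.neighborSet w ∩ unmeasuredSet O lt w) ∪ (I ∩ unmeasuredSet O lt w) ∪
    {v ∈ unmeasuredSet O lt w | (G.neighborSet v ∩ measuredSet O lt w).Nonempty}

lemma iter_mem_flowPath {V : Type*} (O : Set V) (f : V → V) (i : V) :
    ∀ k : ℕ, (∀ j < k, f^[j] i ∉ O) → f^[k] i ∈ flowPath O f i := by
  intro k
  induction k with
  | zero => intro _; exact Relation.ReflTransGen.refl
  | succ m ih =>
    intro h
    have hm : f^[m] i ∈ flowPath O f i := ih (fun j hj => h j (Nat.lt_succ_of_lt hj))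
    have he : f^[m + 1] i = f (f^[m] i) := Function.iterate_succ_apply' f m i
    rw [he]
    exact Relation.ReflTransGen.tail hm ⟨h m (Nat.lt_succ_self m), rfl⟩

/-- Lemma 1, existence part: Let (f, ≺) be a flow on an open graph
(G, I, O) with |I| = |O| = n, let < be a measurement order, and let w ∈ O^C. Then for
every input i ∈ I, the flow path P_i contains at least one member of Q_w. -/
theorem flow_path_meets_required_set {V : Type*} [Fintype V]
    (G : SimpleGraph V) (I O : Set V) (n : ℕ)
    (hI : I.ncard = n) (hO : O.ncard = n)
    (f : V → V) (prec : V → V → Prop)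
    (hmap : ∀ v, v ∉ O → f v ∉ I)
    (hirr : ∀ v, ¬ prec v v)
    (htrans : ∀ a b c, prec a b → prec b c → prec a c)
    (hF1 : ∀ i, i ∉ O → prec i (f i))
    (hF2 : ∀ i, i ∉ O → ∀ j, G.Adj (f i) j → j = i ∨ prec i j)
    (hF3 : ∀ i, i ∉ O → G.Adj i (f i))
    (lt : V → V → Prop)
    (hlt_irr : ∀ v, v ∉ O → ¬ lt v v)
    (hlt_trans : ∀ a b c, a ∉ O → b ∉ O → c ∉ O → lt a b → lt b c → lt a c)
    (hlt_total : ∀ u v, u ∉ O → v ∉ O → u ≠ v → lt u v ∨ lt v u)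
    (hlt_ext : ∀ u v, u ∉ O → v ∉ O → prec u v → lt u v)
    (w : V) (hw : w ∉ O) :
    ∀ i ∈ I, (flowPath O f i ∩ requiredSet G I O lt w).Nonempty := by
  classical
  intro i hi
  set g : ℕ → V := fun k => f^[k] i with hg
  -- there is an index of the path that is not in the measured set
  have hex : ∃ k, g k ∉ measuredSet O lt w := by
    by_contra h
    push_neg at h
    have hmono : ∀ k m : ℕ, k < m → prec (g k) (g m) := by
      intro k m hkm
      induction m with
      | zero => omega
      | succ p ih =>
        have hstep : prec (g p) (g (p + 1)) := by
          have hp : g p ∉ O := (h p).1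
          have he : g (p + 1) = f (g p) := Function.iterate_succ_apply' f p i
          rw [he]
          exact hF1 (g p) hp
        rcases Nat.lt_succ_iff_lt_or_eq.mp hkm with h1 | h1
        · exact htrans _ _ _ (ih h1) hstep
        · rw [h1]; exact hstep
    have hinj : Function.Injective g := by
      intro a b hab
      by_contra hne
      rcases Nat.lt_or_ge a b with h1 | h1
      · exact hirr (g a) (hab ▸ hmono a b h1)
      · exact hirr (g b) (hab ▸ hmono b a (lt_of_le_of_ne h1 (Ne.symm hne)))
    obtain ⟨x, y, hxy, hfe⟩ := Finite.exists_ne_map_eq_of_infinite g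
    exact hxy (hinj hfe)
  obtain ⟨k, hk, hjk⟩ : ∃ k, g k ∉ measuredSet O lt w ∧
      ∀ j < k, g j ∈ measuredSet O lt w :=
    ⟨Nat.find hex, Nat.find_spec hex,
      fun j hj => not_not.mp (Nat.find_min hex hj)⟩
  have hjO : ∀ j < k, g j ∉ O := fun j hj => (hjk j hj).1
  have hpath : g k ∈ flowPath O f i := iter_mem_flowPath O f i k hjO
  -- f w belongs to the required set
  have hfw_req : f w ∈ requiredSet G I O lt w := by
    have hadj : G.Adj w (f w) := hF3 w hw
    have hfw_ne : f w ≠ w := by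
      intro h
      have h1 := hF1 w hw
      rw [h] at h1
      exact hirr w h1
    have hfw_nM : f w ∉ measuredSet O lt w := by
      rintro ⟨hfO, hltw⟩
      exact hlt_irr w hw
        (hlt_trans w (f w) w hw hfO hw (hlt_ext w (f w) hw hfO (hF1 w hw)) hltw)
    have hfwU : f w ∈ unmeasuredSet O lt w := by
      intro hmem
      rcases hmem with h1 | h1
      · exact hfw_nM h1
      · exact hfw_ne h1
    exact Or.inl (Or.inl ⟨hadj, hfwU⟩)
  by_cases hgk : g k = w
  · -- the path continues one more step to f w
    have hkO : g k ∉ O := hgk ▸ hw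
    have hstep : flowStep O f (g k) (g (k + 1)) :=
      ⟨hkO, (Function.iterate_succ_apply' f k i).symm⟩
    have hpath' : g (k + 1) ∈ flowPath O f i := Relation.ReflTransGen.tail hpath hstep
    have he : g (k + 1) = f w := by
      rw [show g (k + 1) = f (g k) from Function.iterate_succ_apply' f k i, hgk]
    exact ⟨g (k + 1), hpath', he ▸ hfw_req⟩
  · -- g k itself is in the required set
    have hU : g k ∈ unmeasuredSet O lt w := by
      intro hmem
      rcases hmem with h1 | h1
      · exact hk h1
      · exact hgk h1
    cases k with
    | zero =>
      have he : g 0 = i := rfl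
      refine ⟨g 0, Relation.ReflTransGen.refl, Or.inl (Or.inr ⟨he ▸ hi, hU⟩)⟩
    | succ m =>
      have hmM : g m ∈ measuredSet O lt w := hjk m (Nat.lt_succ_self m)
      have hmO : g m ∉ O := hmM.1
      have hadj : G.Adj (g m) (g (m + 1)) := by
        rw [show g (m + 1) = f (g m) from Function.iterate_succ_apply' f m i]
        exact hF3 (g m) hmO
      exact ⟨g (m + 1), hpath, Or.inr ⟨hU, ⟨g m, hadj.symm, hmM⟩⟩⟩
end

section
/- (Lemma 1, uniqueness part.) Let (f, ≺) be a flow on an open graph (G, I, O) with |I| = |O| = n, let < be a measurement order, and let w ∈ O^C. If u, v ∈ Q_w and u ≠ v, then u and v do not lie on the same flow path, i.e., there is no i ∈ I with u ∈ P_i and v ∈ P_i. -/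
lemma requiredSet_subset_unmeasured {V : Type*} (G : SimpleGraph V) (I O : Set V)
    (lt : V → V → Prop) (w : V) :
    requiredSet G I O lt w ⊆ unmeasuredSet O lt w := by
  rintro v (( ⟨_, h⟩ | ⟨_, h⟩) | ⟨h, _⟩) <;> exact h

lemma rtg_prec {V : Type*} {O : Set V} {f : V → V} {prec : V → V → Prop}
    (htrans : ∀ a b c, prec a b → prec b c → prec a c)
    (hF1 : ∀ i, i ∉ O → prec i (f i))
    {a b : V} (h : Relation.ReflTransGen (flowStep O f) a b) :
    a = b ∨ (a ∉ O ∧ prec a b) := by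
  induction h with
  | refl => exact Or.inl rfl
  | @tail b c _ hbc IH =>
    obtain ⟨hbO, rfl⟩ := hbc
    rcases IH with rfl | ⟨haO, hab⟩
    · exact Or.inr ⟨hbO, hF1 _ hbO⟩
    · exact Or.inr ⟨haO, htrans _ _ _ hab (hF1 _ hbO)⟩

/-- Main step: if `u ∈ Q_w` and `v ∈ Q_w` is reachable from `u` by at least one flow
step, we get a contradiction. -/
lemma main_step {V : Type*}
    (G : SimpleGraph V) (I O : Set V)
    (f : V → V) (prec : V → V → Prop)
    (hmap : ∀ v, v ∉ O → f v ∉ I)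
    (htrans : ∀ a b c, prec a b → prec b c → prec a c)
    (hF1 : ∀ i, i ∉ O → prec i (f i))
    (hF2 : ∀ i, i ∉ O → ∀ j, G.Adj (f i) j → j = i ∨ prec i j)
    (lt : V → V → Prop)
    (hlt_trans : ∀ a b c, a ∉ O → b ∉ O → c ∉ O → lt a b → lt b c → lt a c)
    (hlt_ext : ∀ u v, u ∉ O → v ∉ O → prec u v → lt u v)
    (w : V) (hw : w ∉ O)
    (u v : V) (hu : u ∈ requiredSet G I O lt w) (hv : v ∈ requiredSet G I O lt w)
    (huv : u ≠ v) (hreach : Relation.ReflTransGen (flowStep O f) u v) : False := by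
  have huU := requiredSet_subset_unmeasured G I O lt w hu
  have hvU := requiredSet_subset_unmeasured G I O lt w hv
  -- u ∈ U_w facts
  have huU' : ¬ (u ∉ O ∧ lt u w) ∧ u ≠ w := by
    have := huU
    simp only [unmeasuredSet, measuredSet, Set.mem_compl_iff, Set.mem_union,
      Set.mem_setOf_eq, Set.mem_singleton_iff, not_or] at this
    exact this
  -- extract last step: ∃ x, rtg u x, x ∉ O, f x = v
  have htg : Relation.TransGen (flowStep O f) u v := by
    rcases (Relation.reflTransGen_iff_eq_or_transGen.mp hreach) with rfl | h
    · exact absurd rfl huv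
    · exact h
  obtain ⟨x, hux, hxO, rfl⟩ := Relation.TransGen.tail'_iff.mp htg
  -- u ∉ O and u ⪯ x
  have hux' := rtg_prec htrans hF1 hux
  have huO : u ∉ O := by
    rcases hux' with rfl | ⟨h, _⟩
    · exact hxO
    · exact h
  -- key: lt x w or x = w implies lt u w; derive "lt x w ∨ x = w" from v's membership
  have hkey : lt x w ∨ x = w := by
    rcases hv with (hvN | hvI) | hvO
    · -- v = f x ∈ N(w): Adj (f x) w
      have hadj : G.Adj (f x) w := (hvN.1 : G.Adj w (f x)).symm
      rcases hF2 x hxO w hadj with rfl | h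
      · exact Or.inr rfl
      · exact Or.inl (hlt_ext _ _ hxO hw h)
    · exact absurd hvI.1 (hmap x hxO)
    · -- v = f x has a neighbour m ∈ M_w
      obtain ⟨m, hm⟩ := hvO.2
      have hmO : m ∉ O := hm.2.1
      have hmw : lt m w := hm.2.2
      rcases hF2 x hxO m hm.1 with rfl | h
      · exact Or.inl hmw
      · exact Or.inl (hlt_trans _ _ _ hxO hmO hw (hlt_ext _ _ hxO hmO h) hmw)
  -- now derive lt u w
  have hltuw : lt u w := by
    rcases hkey with hxw | rfl
    · rcases hux' with rfl | ⟨_, hp⟩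
      · exact hxw
      · exact hlt_trans _ _ _ huO hxO hw (hlt_ext _ _ huO hxO hp) hxw
    · rcases hux' with rfl | ⟨_, hp⟩
      · exact absurd rfl huU'.2
      · exact hlt_ext _ _ huO hw hp
  exact huU'.1 ⟨huO, hltuw⟩

/-- Lemma 1, uniqueness part: Let (f, ≺) be a flow on an open graph
(G, I, O) with |I| = |O| = n, let < be a measurement order, and let w ∈ O^C. Then for
u, v ∈ Q_w with u ≠ v, u and v do not lie on the same flow path: there is no i ∈ I
with u ∈ P_i and v ∈ P_i. -/
theorem required_set_members_on_distinct_paths {V : Type*} [Fintype V]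
    (G : SimpleGraph V) (I O : Set V) (n : ℕ)
    (hI : I.ncard = n) (hO : O.ncard = n)
    (f : V → V) (prec : V → V → Prop)
    (hmap : ∀ v, v ∉ O → f v ∉ I)
    (hirr : ∀ v, ¬ prec v v)
    (htrans : ∀ a b c, prec a b → prec b c → prec a c)
    (hF1 : ∀ i, i ∉ O → prec i (f i))
    (hF2 : ∀ i, i ∉ O → ∀ j, G.Adj (f i) j → j = i ∨ prec i j)
    (hF3 : ∀ i, i ∉ O → G.Adj i (f i))
    (lt : V → V → Prop)
    (hlt_irr : ∀ v, v ∉ O → ¬ lt v v)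
    (hlt_trans : ∀ a b c, a ∉ O → b ∉ O → c ∉ O → lt a b → lt b c → lt a c)
    (hlt_total : ∀ u v, u ∉ O → v ∉ O → u ≠ v → lt u v ∨ lt v u)
    (hlt_ext : ∀ u v, u ∉ O → v ∉ O → prec u v → lt u v)
    (w : V) (hw : w ∉ O) :
    ∀ u ∈ requiredSet G I O lt w, ∀ v ∈ requiredSet G I O lt w, u ≠ v →
      ¬ ∃ i ∈ I, u ∈ flowPath O f i ∧ v ∈ flowPath O f i := by
  intro u hu v hv huv ⟨i, _, hiu, hiv⟩
  have hRU : Relator.RightUnique (flowStep O f) := by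
    rintro a b c ⟨_, rfl⟩ ⟨_, rfl⟩; rfl
  rcases Relation.ReflTransGen.total_of_right_unique hRU hiu hiv with h | h
  · exact main_step G I O f prec hmap htrans hF1 hF2 lt hlt_trans hlt_ext w hw
      u v hu hv huv h
  · exact main_step G I O f prec hmap htrans hF1 hF2 lt hlt_trans hlt_ext w hw
      v u hv hu huv.symm h
end

section
/- (Lemma 1.) Let (f, ≺) be a flow on an open graph (G, I, O) with |I| = |O| = n, let < be a measurement order, and let w ∈ O^C. Then for every input i ∈ I, the flow path P_i contains exactly one member of Q_w, i.e., |P_i ∩ Q_w| = 1. -/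
/-- Lemma 1: Let (f, ≺) be a flow on an open graph (G, I, O) with
|I| = |O| = n, let < be a measurement order, and let w ∈ O^C. Then for every input
i ∈ I, the flow path P_i contains exactly one member of Q_w, i.e. |P_i ∩ Q_w| = 1. -/
theorem flow_path_meets_required_set_exactly_once {V : Type*} [Fintype V]
    (G : SimpleGraph V) (I O : Set V) (n : ℕ)
    (hI : I.ncard = n) (hO : O.ncard = n)
    (f : V → V) (prec : V → V → Prop)
    (hmap : ∀ v, v ∉ O → f v ∉ I)
    (hirr : ∀ v, ¬ prec v v)
    (htrans : ∀ a b c, prec a b → prec b c → prec a c)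
    (hF1 : ∀ i, i ∉ O → prec i (f i))
    (hF2 : ∀ i, i ∉ O → ∀ j, G.Adj (f i) j → j = i ∨ prec i j)
    (hF3 : ∀ i, i ∉ O → G.Adj i (f i))
    (lt : V → V → Prop)
    (hlt_irr : ∀ v, v ∉ O → ¬ lt v v)
    (hlt_trans : ∀ a b c, a ∉ O → b ∉ O → c ∉ O → lt a b → lt b c → lt a c)
    (hlt_total : ∀ u v, u ∉ O → v ∉ O → u ≠ v → lt u v ∨ lt v u)
    (hlt_ext : ∀ u v, u ∉ O → v ∉ O → prec u v → lt u v)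
    (w : V) (hw : w ∉ O) :
    ∀ i ∈ I, (flowPath O f i ∩ requiredSet G I O lt w).ncard = 1 := by
  classical
  intro i hi
  set g : ℕ → V := fun m => f^[m] i with hg
  have hgsucc : ∀ m, g (m+1) = f (g m) := fun m => Function.iterate_succ_apply' f m i
  -- the path must eventually hit an output
  have hexO : ∃ m, g m ∈ O := by
    by_contra h
    push_neg at h
    have hmono : ∀ a b, a < b → prec (g a) (g b) := by
      intro a b hab
      induction b with
      | zero => omega
      | succ b ih =>
        have hstep : prec (g b) (g (b+1)) := by rw [hgsucc]; exact hF1 _ (h b)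
        rcases Nat.lt_succ_iff_lt_or_eq.mp hab with h' | h'
        · exact htrans _ _ _ (ih h') hstep
        · subst h'; exact hstep
    obtain ⟨a, b, hab, heq⟩ := Finite.exists_ne_map_eq_of_infinite g
    rcases hab.lt_or_gt with h' | h'
    · have := hmono a b h'; rw [heq] at this; exact hirr _ this
    · have := hmono b a h'; rw [heq] at this; exact hirr _ this
  set N := Nat.find hexO with hN
  have hNO : g N ∈ O := Nat.find_spec hexO
  have hltN : ∀ j, j < N → g j ∉ O := fun j hj => Nat.find_min hexO hj
  -- path characterization
  have hpath_sub : ∀ v ∈ flowPath O f i, ∃ m, m ≤ N ∧ g m = v := by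
    intro v hv
    have h1 : ∃ m, g m = v ∧ ∀ j, j < m → g j ∉ O := by
      induction hv with
      | refl => exact ⟨0, rfl, by omega⟩
      | tail hb hstep ih =>
        obtain ⟨m, hm, hall⟩ := ih
        obtain ⟨hbO, hfb⟩ := hstep
        refine ⟨m+1, by rw [hgsucc, hm, hfb], ?_⟩
        intro j hj
        rcases Nat.lt_succ_iff_lt_or_eq.mp hj with h | h
        · exact hall j h
        · subst h; rw [hm]; exact hbO
    obtain ⟨m, hm, hall⟩ := h1
    refine ⟨m, ?_, hm⟩
    by_contra h
    exact hall N (by omega) hNO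
  have hpath_mem : ∀ m, m ≤ N → g m ∈ flowPath O f i := by
    intro m hm
    induction m with
    | zero => exact Relation.ReflTransGen.refl
    | succ m ih =>
      exact Relation.ReflTransGen.tail (ih (by omega)) ⟨hltN m (by omega), (hgsucc m).symm⟩
  -- prec chain along the path
  have hchain : ∀ a b, a < b → b ≤ N → prec (g a) (g b) := by
    intro a b hab hbN
    induction b with
    | zero => omega
    | succ b ih =>
      have hstep : prec (g b) (g (b+1)) := by
        rw [hgsucc]; exact hF1 _ (hltN b (by omega))
      rcases Nat.lt_succ_iff_lt_or_eq.mp hab with h | h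
      · exact htrans _ _ _ (ih h (by omega)) hstep
      · subst h; exact hstep
  have hlg : ∀ a b, a < b → b < N → lt (g a) (g b) :=
    fun a b hab hbN => hlt_ext _ _ (hltN a (by omega)) (hltN b hbN) (hchain a b hab (by omega))
  -- unfold membership in U_w
  have hUiff : ∀ v, v ∈ unmeasuredSet O lt w ↔ ((v ∈ O ∨ ¬ lt v w) ∧ v ≠ w) := by
    intro v
    simp only [unmeasuredSet, measuredSet, Set.mem_compl_iff, Set.mem_union,
      Set.mem_setOf_eq, Set.mem_singleton_iff]
    tauto
  have hNU : g N ∈ unmeasuredSet O lt w := by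
    rw [hUiff]
    exact ⟨Or.inl hNO, fun h => hw (h ▸ hNO)⟩
  have hexU : ∃ m, g m ∈ unmeasuredSet O lt w := ⟨N, hNU⟩
  set s := Nat.find hexU with hsdef
  have hsU : g s ∈ unmeasuredSet O lt w := Nat.find_spec hexU
  have hsmin : ∀ j, j < s → g j ∉ unmeasuredSet O lt w := fun j hj => Nat.find_min hexU hj
  have hsN : s ≤ N := Nat.find_min' hexU hNU
  -- everything at or after s is in U_w
  have hUafter : ∀ j, s ≤ j → j ≤ N → g j ∈ unmeasuredSet O lt w := by
    intro j hsj hjN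
    rcases eq_or_lt_of_le hjN with h | hjN'
    · subst h; exact hNU
    rcases eq_or_lt_of_le hsj with h | hsj'
    · subst h; exact hsU
    have hsO : g s ∉ O := hltN s (by omega)
    have hjO : g j ∉ O := hltN j hjN'
    obtain ⟨h1, h2⟩ := (hUiff _).mp hsU
    have hnsw : ¬ lt (g s) w := h1.resolve_left (fun h => hsO h)
    have hws : lt w (g s) := (hlt_total w (g s) hw hsO (Ne.symm h2)).resolve_right hnsw
    have hwj : lt w (g j) := hlt_trans w (g s) (g j) hw hsO hjO hws (hlg s j hsj' hjN')
    rw [hUiff]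
    refine ⟨Or.inr (fun h => hlt_irr w hw (hlt_trans w (g j) w hw hjO hw hwj h)), ?_⟩
    intro h; rw [h] at hwj; exact hlt_irr w hw hwj
  -- Q_w ⊆ U_w
  have hQsubU : requiredSet G I O lt w ⊆ unmeasuredSet O lt w := by
    intro v hv
    rcases hv with (h | h) | h
    · exact h.2
    · exact h.2
    · exact h.1
  -- later path vertices are not in Q_w
  have hafter_notQ : ∀ m, s < m → m ≤ N → g m ∉ requiredSet G I O lt w := by
    intro m hsm hmN hQ
    obtain ⟨u, rfl⟩ : ∃ u, m = u + 1 := ⟨m - 1, by omega⟩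
    have huO : g u ∉ O := hltN u (by omega)
    have huU : g u ∈ unmeasuredSet O lt w := hUafter u (by omega) (by omega)
    obtain ⟨hu1, hu2⟩ := (hUiff _).mp huU
    have hunlt : ¬ lt (g u) w := hu1.resolve_left (fun h => huO h)
    have hfu : g (u+1) = f (g u) := hgsucc u
    rcases hQ with (h | h) | h
    · -- neighbour of w
      have hadj : G.Adj (f (g u)) w := by rw [← hfu]; exact h.1.symm
      rcases hF2 (g u) huO w hadj with h' | h'
      · exact hu2 h'.symm
      · exact hunlt (hlt_ext _ _ huO hw h')
    · -- an input
      have : f (g u) ∈ I := by rw [← hfu]; exact h.1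
      exact hmap (g u) huO this
    · -- neighbour of a measured vertex
      obtain ⟨x, hx1, hx2, hx3⟩ := h.2
      have hadj : G.Adj (f (g u)) x := by rw [← hfu]; exact hx1
      rcases hF2 (g u) huO x hadj with h' | h'
      · rw [h'] at hx3; exact hunlt hx3
      · exact hunlt (hlt_trans (g u) x w huO hx2 hw (hlt_ext _ _ huO hx2 h') hx3)
  -- the vertex g s is in Q_w
  have hsQ : g s ∈ requiredSet G I O lt w := by
    rcases Nat.eq_zero_or_pos s with h | h
    · -- s = 0 : g 0 = i is an input
      left; right
      exact ⟨by rw [h]; exact hi, hsU⟩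
    · obtain ⟨t, hst⟩ : ∃ t, s = t + 1 := ⟨s - 1, by omega⟩
      have htO : g t ∉ O := hltN t (by omega)
      have htnU : g t ∉ unmeasuredSet O lt w := hsmin t (by omega)
      have hft : g s = f (g t) := by rw [hst]; exact hgsucc t
      have hadj : G.Adj (g t) (g s) := by rw [hft]; exact hF3 (g t) htO
      rw [hUiff] at htnU
      by_cases hgw : g t = w
      · -- previous vertex is w itself
        left; left
        exact ⟨by rw [← hgw]; exact hadj, hsU⟩
      · -- previous vertex is measured
        have hmeas : lt (g t) w := by
          by_contra h'
          exact htnU ⟨Or.inr h', hgw⟩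
        right
        exact ⟨hsU, g t, hadj.symm, htO, hmeas⟩
  -- conclude: the intersection is the singleton {g s}
  have hset : flowPath O f i ∩ requiredSet G I O lt w = {g s} := by
    ext v
    simp only [Set.mem_inter_iff, Set.mem_singleton_iff]
    constructor
    · rintro ⟨hv1, hv2⟩
      obtain ⟨m, hmN, rfl⟩ := hpath_sub v hv1
      rcases lt_trichotomy m s with h | h | h
      · exact absurd hv2 (fun h' => hsmin m h (hQsubU h'))
      · rw [h]
      · exact absurd hv2 (hafter_notQ m h hmN)
    · rintro rfl
      exact ⟨hpath_mem s hsN, hsQ⟩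
  rw [hset]
  exact Set.ncard_singleton _
end

section
/- (Theorem 1, combinatorial form.) Let (f, ≺) be a flow on an open graph (G, I, O) with |I| = |O| = n, I ≠ O, and |V| = m. Then for every measurement order < and every w ∈ O^C, the set of qubits that must simultaneously exist when w is measured satisfies |Q_w ∪ {w}| = n + 1 = min(n + 1, m). -/
/-- Theorem 1, combinatorial form: Let (f, ≺) be a flow on an open graph
(G, I, O) with |I| = |O| = n, I ≠ O, and |V| = m. Then for every measurement order <
and every w ∈ O^C, the set of qubits that must simultaneously exist when w is measured
satisfies |Q_w ∪ {w}| = n + 1 = min(n + 1, m). -/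
theorem required_qubits_eq_n_add_one {V : Type*} [Fintype V]
    (G : SimpleGraph V) (I O : Set V) (n m : ℕ)
    (hI : I.ncard = n) (hO : O.ncard = n) (hIO : I ≠ O)
    (hm : Nat.card V = m)
    (f : V → V) (prec : V → V → Prop)
    (hmap : ∀ v, v ∉ O → f v ∉ I)
    (hirr : ∀ v, ¬ prec v v)
    (htrans : ∀ a b c, prec a b → prec b c → prec a c)
    (hF1 : ∀ i, i ∉ O → prec i (f i))
    (hF2 : ∀ i, i ∉ O → ∀ j, G.Adj (f i) j → j = i ∨ prec i j)
    (hF3 : ∀ i, i ∉ O → G.Adj i (f i))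
    (lt : V → V → Prop)
    (hlt_irr : ∀ v, v ∉ O → ¬ lt v v)
    (hlt_trans : ∀ a b c, a ∉ O → b ∉ O → c ∉ O → lt a b → lt b c → lt a c)
    (hlt_total : ∀ u v, u ∉ O → v ∉ O → u ≠ v → lt u v ∨ lt v u)
    (hlt_ext : ∀ u v, u ∉ O → v ∉ O → prec u v → lt u v)
    (w : V) (hw : w ∉ O) :
    (requiredSet G I O lt w ∪ {w}).ncard = n + 1 ∧ n + 1 = min (n + 1) m := by
  classical
  set T : Set V := measuredSet O lt w ∪ {w} with hTdef
  have hwT : w ∈ T := Or.inr rfl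
  have hTO : T ⊆ Oᶜ := by
    rintro v (h | h)
    · exact h.1
    · rcases h with rfl; exact hw
  -- f is injective on Oᶜ
  have finj : Set.InjOn f Oᶜ := by
    intro a ha b hb hab
    by_contra hne
    have h1 : G.Adj (f b) a := by
      have := (hF3 a ha).symm
      rwa [hab] at this
    have h2 : G.Adj (f a) b := by
      have := (hF3 b hb).symm
      rwa [← hab] at this
    rcases hF2 b hb a h1 with h | h
    · exact hne h
    · rcases hF2 a ha b h2 with h' | h'
      · exact hne h'.symm
      · exact hirr a (htrans a b a h' h)
  -- f maps Oᶜ onto Iᶜ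
  have hIc : Iᶜ.ncard = Oᶜ.ncard := by
    have h1 := Set.ncard_add_ncard_compl I
    have h2 := Set.ncard_add_ncard_compl O
    omega
  have himg : f '' Oᶜ = Iᶜ := by
    apply Set.eq_of_subset_of_ncard_le
    · rintro _ ⟨x, hx, rfl⟩; exact hmap x hx
    · rw [Set.ncard_image_of_injOn finj, hIc]
    · exact Set.toFinite _
  -- T ⊆ I ∪ f '' T
  have hsub : T ⊆ I ∪ f '' T := by
    intro t ht
    by_cases htI : t ∈ I
    · exact Or.inl htI
    · have : t ∈ f '' Oᶜ := himg ▸ htI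
      rcases this with ⟨x, hx, rfl⟩
      refine Or.inr ⟨x, Or.inl ⟨hx, ?_⟩, rfl⟩
      rcases ht with h | h
      · exact hlt_trans x (f x) w hx h.1 hw
          (hlt_ext x (f x) hx h.1 (hF1 x hx)) h.2
      · have h' : f x = w := h
        have : prec x (f x) := hF1 x hx
        rw [h'] at this
        exact hlt_ext x w hx hw this
  -- the key set identity
  have hU : unmeasuredSet O lt w = Tᶜ := rfl
  have hkey : requiredSet G I O lt w = (I ∪ f '' T) \ T := by
    ext v
    constructor
    · intro hv
      have hvU : v ∈ Tᶜ := by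
        rcases hv with (⟨_, h⟩ | ⟨_, h⟩) | ⟨h, _⟩ <;> exact h
      refine ⟨?_, hvU⟩
      by_cases hvI : v ∈ I
      · exact Or.inl hvI
      · have : v ∈ f '' Oᶜ := himg ▸ hvI
        rcases this with ⟨x, hx, rfl⟩
        refine Or.inr ⟨x, ?_, rfl⟩
        rcases hv with (⟨hadj, _⟩ | ⟨hvI', _⟩) | ⟨_, u, huadj, huM⟩
        · -- v ∈ N(w): F2 gives w = x or x ≺ w
          rcases hF2 x hx w ((hadj : G.Adj w (f x)).symm) with h | h
          · exact Or.inr h.symm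
          · exact Or.inl ⟨hx, hlt_ext x w hx hw h⟩
        · exact absurd hvI' hvI
        · -- v has a measured neighbour u
          rcases hF2 x hx u ((huadj : G.Adj (f x) u)) with h | h
          · exact Or.inl (h ▸ huM)
          · exact Or.inl ⟨hx, hlt_trans x u w hx huM.1 hw
              (hlt_ext x u hx huM.1 h) huM.2⟩
    · rintro ⟨hv, hvT⟩
      rcases hv with hvI | ⟨x, hxT, rfl⟩
      · exact Or.inl (Or.inr ⟨hvI, hvT⟩)
      · have hx : x ∉ O := hTO hxT
        rcases hxT with hxM | hxw
        · -- x measured: f x ∈ O_w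
          exact Or.inr ⟨hvT, ⟨x, (hF3 x hx).symm, hxM⟩⟩
        · -- x = w: f w ∈ N_w
          rcases hxw with rfl
          exact Or.inl (Or.inl ⟨hF3 x hx, hvT⟩)
  -- counting
  have hdisj : Disjoint I (f '' T) := by
    rw [Set.disjoint_right]
    rintro _ ⟨x, hxT, rfl⟩
    exact hmap x (hTO hxT)
  have hcard1 : (I ∪ f '' T).ncard = n + T.ncard := by
    rw [Set.ncard_union_eq hdisj (Set.toFinite _) (Set.toFinite _), hI,
      Set.ncard_image_of_injOn (finj.mono hTO)]
  have hcard2 : ((I ∪ f '' T) \ T).ncard = n := by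
    rw [Set.ncard_diff hsub (Set.toFinite _), hcard1]
    omega
  have hwD : w ∉ (I ∪ f '' T) \ T := fun h => h.2 hwT
  have hmain : (requiredSet G I O lt w ∪ {w}).ncard = n + 1 := by
    rw [hkey, Set.union_singleton, Set.ncard_insert_of_notMem hwD (Set.toFinite _), hcard2]
  refine ⟨hmain, ?_⟩
  have hle : (requiredSet G I O lt w ∪ {w}).ncard ≤ m := by
    rw [← hm, ← Set.ncard_univ]
    exact Set.ncard_le_ncard (Set.subset_univ _) (Set.toFinite _)
  omega
end

section
/- Define g on O^C = {i_1, …, i_n} ∪ {v_{n+1}, …, v_{m'}} by g(i_j) = {v_j, v_{n−1}} for 1 ≤ j ≤ n−2, g(v_j) = {v_{j−2}, v_{j−1}} for n+1 ≤ j ≤ m', g(i_{n−1}) = {v_{m'−1}, v_{m'}}, and g(i_n) = {v_{m'}}. Then there exists a strict partial order ≺ on the vertex set of H_n such that (g, ≺) is a gflow on the open graph (H_n, I, O). -/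
/-- The graph H^C_n on the m-element vertex set {i_1, …, i_n, v_1, …, v_{m'}}
(with m' = m − n), modelled as `Fin n ⊕ Fin (m - n)` where `Sum.inl ⟨j-1,_⟩ = i_j`
and `Sum.inr ⟨k-1,_⟩ = v_k` (0-indexed).  Its edges are {i_j, v_j} for 1 ≤ j ≤ n−2,
{v_{n+j}, v_{n+j+1}} for 0 ≤ j ≤ m'−n−1, and {i_{n−1}, v_{m'}}. -/
def HC (n m : ℕ) : SimpleGraph (Fin n ⊕ Fin (m - n)) :=
  SimpleGraph.fromRel (fun u v =>
    (∃ (j : Fin n) (k : Fin (m - n)), u = Sum.inl j ∧ v = Sum.inr k ∧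
        (j : ℕ) = (k : ℕ) ∧ (j : ℕ) + 1 ≤ n - 2) ∨
    (∃ (a b : Fin (m - n)), u = Sum.inr a ∧ v = Sum.inr b ∧
        (b : ℕ) = (a : ℕ) + 1 ∧ n - 1 ≤ (a : ℕ)) ∨
    (∃ (j : Fin n) (k : Fin (m - n)), u = Sum.inl j ∧ v = Sum.inr k ∧
        (j : ℕ) + 1 = n - 1 ∧ (k : ℕ) + 1 = m - n))

/-- The input set I = {i_1, …, i_n}. -/
def Iset (n m : ℕ) : Set (Fin n ⊕ Fin (m - n)) :=
  {x | ∃ j : Fin n, x = Sum.inl j}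

/-- The output set O = {v_1, …, v_n}. -/
def Oset (n m : ℕ) : Set (Fin n ⊕ Fin (m - n)) :=
  {x | ∃ k : Fin (m - n), x = Sum.inr k ∧ (k : ℕ) < n}

/-- The candidate gflow function g on O^C:
g(i_j) = {v_j, v_{n−1}} for 1 ≤ j ≤ n−2, g(v_j) = {v_{j−2}, v_{j−1}} for n+1 ≤ j ≤ m',
g(i_{n−1}) = {v_{m'−1}, v_{m'}}, and g(i_n) = {v_{m'}}  (1-indexed, with m' = m − n). -/
def gfun (n m : ℕ) (u : Fin n ⊕ Fin (m - n)) : Set (Fin n ⊕ Fin (m - n)) :=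
  {x | ∃ a : Fin (m - n), x = Sum.inr a ∧
    ((∃ j : Fin n, u = Sum.inl j ∧ (j : ℕ) + 1 ≤ n - 2 ∧
        ((a : ℕ) = (j : ℕ) ∨ (a : ℕ) + 1 = n - 1)) ∨
     (∃ j : Fin n, u = Sum.inl j ∧ (j : ℕ) + 1 = n - 1 ∧
        ((a : ℕ) + 2 = m - n ∨ (a : ℕ) + 1 = m - n)) ∨
     (∃ j : Fin n, u = Sum.inl j ∧ (j : ℕ) + 1 = n ∧ (a : ℕ) + 1 = m - n) ∨
     (∃ b : Fin (m - n), u = Sum.inr b ∧ n ≤ (b : ℕ) ∧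
        ((a : ℕ) + 2 = (b : ℕ) ∨ (a : ℕ) + 1 = (b : ℕ))))}

/-- Rank function used to build the strict partial order. -/
def rho (n m : ℕ) : Fin n ⊕ Fin (m - n) → ℕ
  | Sum.inl j => if (j : ℕ) + 1 = n then 0 else 1
  | Sum.inr k => m - n - (k : ℕ) + 2

section ParityLemmas
-- (paste from scratch.lean, checked)
lemma odd_inter_pair {V : Type*} (N : Set V) (a b : V) (hab : a ≠ b) :
    Odd ((N ∩ {a, b}).ncard) ↔ ¬((a ∈ N) ↔ (b ∈ N)) := by
  by_cases ha : a ∈ N <;> by_cases hb : b ∈ N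
  · have h : N ∩ {a, b} = {a, b} := by
      ext x
      simp only [Set.mem_inter_iff, Set.mem_insert_iff, Set.mem_singleton_iff,
        and_iff_right_iff_imp]
      rintro (rfl | rfl) <;> assumption
    rw [h, Set.ncard_pair hab]
    simp [ha, hb, Nat.odd_iff]
  · have h : N ∩ {a, b} = {a} := by
      ext x
      simp only [Set.mem_inter_iff, Set.mem_insert_iff, Set.mem_singleton_iff]
      constructor
      · rintro ⟨hx, h⟩
        rcases h with rfl | rfl
        · rfl
        · exact absurd hx hb
      · rintro rfl; exact ⟨ha, Or.inl rfl⟩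
    rw [h, Set.ncard_singleton]
    simp [ha, hb, Nat.odd_iff]
  · have h : N ∩ {a, b} = {b} := by
      ext x
      simp only [Set.mem_inter_iff, Set.mem_insert_iff, Set.mem_singleton_iff]
      constructor
      · rintro ⟨hx, h⟩
        rcases h with rfl | rfl
        · exact absurd hx ha
        · rfl
      · rintro rfl; exact ⟨hb, Or.inr rfl⟩
    rw [h, Set.ncard_singleton]
    simp [ha, hb, Nat.odd_iff]
  · have h : N ∩ {a, b} = ∅ := by
      ext x
      simp only [Set.mem_inter_iff, Set.mem_insert_iff, Set.mem_singleton_iff,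
        Set.mem_empty_iff_false, iff_false, not_and]
      rintro hx (rfl | rfl) <;> [exact ha hx; exact hb hx]
    rw [h]
    simp [ha, hb, Nat.odd_iff]

lemma odd_inter_single {V : Type*} (N : Set V) (a : V) :
    Odd ((N ∩ {a}).ncard) ↔ a ∈ N := by
  by_cases ha : a ∈ N
  · have h : N ∩ {a} = {a} := by
      ext x; simp only [Set.mem_inter_iff, Set.mem_singleton_iff, and_iff_right_iff_imp]
      rintro rfl; exact ha
    rw [h, Set.ncard_singleton]; simp [ha, Nat.odd_iff]
  · have h : N ∩ {a} = ∅ := by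
      ext x; simp only [Set.mem_inter_iff, Set.mem_singleton_iff,
        Set.mem_empty_iff_false, iff_false, not_and]
      rintro hx rfl; exact ha hx
    rw [h]; simp [ha, Nat.odd_iff]
end ParityLemmas

section AdjLemmas
def HCRel (n m : ℕ) (u v : Fin n ⊕ Fin (m - n)) : Prop :=
    (∃ (j : Fin n) (k : Fin (m - n)), u = Sum.inl j ∧ v = Sum.inr k ∧
        (j : ℕ) = (k : ℕ) ∧ (j : ℕ) + 1 ≤ n - 2) ∨
    (∃ (a b : Fin (m - n)), u = Sum.inr a ∧ v = Sum.inr b ∧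
        (b : ℕ) = (a : ℕ) + 1 ∧ n - 1 ≤ (a : ℕ)) ∨
    (∃ (j : Fin n) (k : Fin (m - n)), u = Sum.inl j ∧ v = Sum.inr k ∧
        (j : ℕ) + 1 = n - 1 ∧ (k : ℕ) + 1 = m - n)

lemma HC_def (n m : ℕ) : HC n m = SimpleGraph.fromRel (HCRel n m) := rfl

lemma mem_nbhd (n m : ℕ) (j x : Fin n ⊕ Fin (m - n)) :
    x ∈ ((HC n m)ᶜ).neighborSet j ↔ j ≠ x ∧ ¬ HCRel n m j x ∧ ¬ HCRel n m x j := by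
  rw [SimpleGraph.mem_neighborSet, SimpleGraph.compl_adj, HC_def, SimpleGraph.fromRel_adj]
  tauto

lemma rel_inl_inr (n m : ℕ) (j : Fin n) (k : Fin (m - n)) :
    HCRel n m (Sum.inl j) (Sum.inr k) ↔
      ((j : ℕ) = (k : ℕ) ∧ (j : ℕ) + 1 ≤ n - 2) ∨ ((j : ℕ) + 1 = n - 1 ∧ (k : ℕ) + 1 = m - n) := by
  simp [HCRel]

lemma rel_inr_inl (n m : ℕ) (k : Fin (m - n)) (j : Fin n) :
    HCRel n m (Sum.inr k) (Sum.inl j) ↔ False := by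
  simp [HCRel]

lemma rel_inr_inr (n m : ℕ) (a b : Fin (m - n)) :
    HCRel n m (Sum.inr a) (Sum.inr b) ↔ (b : ℕ) = (a : ℕ) + 1 ∧ n - 1 ≤ (a : ℕ) := by
  simp [HCRel]

lemma inr_mem_N_inl (n m : ℕ) (j : Fin n) (k : Fin (m - n)) :
    (Sum.inr k : Fin n ⊕ Fin (m - n)) ∈ ((HC n m)ᶜ).neighborSet (Sum.inl j) ↔
      ¬(((j : ℕ) = (k : ℕ) ∧ (j : ℕ) + 1 ≤ n - 2) ∨
        ((j : ℕ) + 1 = n - 1 ∧ (k : ℕ) + 1 = m - n)) := by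
  rw [mem_nbhd, rel_inl_inr, rel_inr_inl]
  simp

lemma inr_mem_N_inr (n m : ℕ) (c k : Fin (m - n)) :
    (Sum.inr k : Fin n ⊕ Fin (m - n)) ∈ ((HC n m)ᶜ).neighborSet (Sum.inr c) ↔
      ¬((c : ℕ) = (k : ℕ)) ∧ ¬((k : ℕ) = (c : ℕ) + 1 ∧ n - 1 ≤ (c : ℕ)) ∧
        ¬((c : ℕ) = (k : ℕ) + 1 ∧ n - 1 ≤ (k : ℕ)) := by
  rw [mem_nbhd, rel_inr_inr, rel_inr_inr]
  simp [Fin.ext_iff]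
end AdjLemmas

section GfunLemmas
lemma mem_gfun_inl (n m : ℕ) (j0 : Fin n) (x : Fin n ⊕ Fin (m - n)) :
    x ∈ gfun n m (Sum.inl j0) ↔ ∃ a : Fin (m - n), x = Sum.inr a ∧
      (((j0 : ℕ) + 1 ≤ n - 2 ∧ ((a : ℕ) = (j0 : ℕ) ∨ (a : ℕ) + 1 = n - 1)) ∨
       ((j0 : ℕ) + 1 = n - 1 ∧ ((a : ℕ) + 2 = m - n ∨ (a : ℕ) + 1 = m - n)) ∨
       ((j0 : ℕ) + 1 = n ∧ (a : ℕ) + 1 = m - n)) := by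
  simp [gfun, eq_comm (a := Sum.inl j0)]

lemma mem_gfun_inr (n m : ℕ) (c0 : Fin (m - n)) (x : Fin n ⊕ Fin (m - n)) :
    x ∈ gfun n m (Sum.inr c0) ↔ ∃ a : Fin (m - n), x = Sum.inr a ∧
      (n ≤ (c0 : ℕ) ∧ ((a : ℕ) + 2 = (c0 : ℕ) ∨ (a : ℕ) + 1 = (c0 : ℕ))) := by
  simp [gfun, eq_comm (a := Sum.inr c0)]

lemma gfun_eq_small (n m : ℕ) (hn : 2 ≤ n) (hm : 2 * n < m) (j0 : Fin n)
    (hj : (j0 : ℕ) + 1 ≤ n - 2) :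
    ∃ a b : Fin (m - n), (a : ℕ) = (j0 : ℕ) ∧ (b : ℕ) = n - 2 ∧
      gfun n m (Sum.inl j0) = {Sum.inr a, Sum.inr b} := by
  have hj0 := j0.isLt
  refine ⟨⟨(j0 : ℕ), by omega⟩, ⟨n - 2, by omega⟩, rfl, rfl, ?_⟩
  ext x
  rw [mem_gfun_inl]
  simp only [Set.mem_insert_iff, Set.mem_singleton_iff]
  constructor
  · rintro ⟨a, rfl, h⟩
    simp only [Sum.inr.injEq, Fin.ext_iff]
    omega
  · rintro (rfl | rfl)
    · exact ⟨_, rfl, Or.inl ⟨hj, Or.inl rfl⟩⟩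
    · exact ⟨_, rfl, Or.inl ⟨hj, Or.inr (by simp; omega)⟩⟩

lemma gfun_eq_mid (n m : ℕ) (hn : 2 ≤ n) (hm : 2 * n < m) (j0 : Fin n)
    (hj : (j0 : ℕ) + 1 = n - 1) :
    ∃ a b : Fin (m - n), (a : ℕ) = m - n - 2 ∧ (b : ℕ) = m - n - 1 ∧
      gfun n m (Sum.inl j0) = {Sum.inr a, Sum.inr b} := by
  have hj0 := j0.isLt
  refine ⟨⟨m - n - 2, by omega⟩, ⟨m - n - 1, by omega⟩, rfl, rfl, ?_⟩
  ext x
  rw [mem_gfun_inl]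
  simp only [Set.mem_insert_iff, Set.mem_singleton_iff]
  constructor
  · rintro ⟨a, rfl, h⟩
    simp only [Sum.inr.injEq, Fin.ext_iff]
    omega
  · rintro (rfl | rfl)
    · exact ⟨_, rfl, Or.inr (Or.inl ⟨hj, Or.inl (by simp; omega)⟩)⟩
    · exact ⟨_, rfl, Or.inr (Or.inl ⟨hj, Or.inr (by simp; omega)⟩)⟩

lemma gfun_eq_last (n m : ℕ) (hn : 2 ≤ n) (hm : 2 * n < m) (j0 : Fin n)
    (hj : (j0 : ℕ) + 1 = n) :
    ∃ a : Fin (m - n), (a : ℕ) = m - n - 1 ∧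
      gfun n m (Sum.inl j0) = {Sum.inr a} := by
  have hj0 := j0.isLt
  refine ⟨⟨m - n - 1, by omega⟩, rfl, ?_⟩
  ext x
  rw [mem_gfun_inl]
  simp only [Set.mem_singleton_iff]
  constructor
  · rintro ⟨a, rfl, h⟩
    simp only [Sum.inr.injEq, Fin.ext_iff]
    omega
  · rintro rfl
    exact ⟨_, rfl, Or.inr (Or.inr ⟨hj, by simp; omega⟩)⟩

lemma gfun_eq_inr (n m : ℕ) (hn : 2 ≤ n) (hm : 2 * n < m) (c0 : Fin (m - n))
    (hc : n ≤ (c0 : ℕ)) :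
    ∃ a b : Fin (m - n), (a : ℕ) = (c0 : ℕ) - 2 ∧ (b : ℕ) = (c0 : ℕ) - 1 ∧
      gfun n m (Sum.inr c0) = {Sum.inr a, Sum.inr b} := by
  have hc0 := c0.isLt
  refine ⟨⟨(c0 : ℕ) - 2, by omega⟩, ⟨(c0 : ℕ) - 1, by omega⟩, rfl, rfl, ?_⟩
  ext x
  rw [mem_gfun_inr]
  simp only [Set.mem_insert_iff, Set.mem_singleton_iff]
  constructor
  · rintro ⟨a, rfl, h⟩
    simp only [Sum.inr.injEq, Fin.ext_iff]
    omega
  · rintro (rfl | rfl)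
    · exact ⟨_, rfl, ⟨hc, Or.inl (by simp; omega)⟩⟩
    · exact ⟨_, rfl, ⟨hc, Or.inr (by simp; omega)⟩⟩
end GfunLemmas

/-- With g as above, there exists a strict partial order ≺ on the vertex
set of H_n = (H^C_n)ᶜ such that (g, ≺) is a gflow on the open graph (H_n, I, O):
g maps O^C into subsets of I^C and for every i ∈ O^C, (G1) every j ∈ g(i) satisfies
i ≺ j, (G2) every j ∈ Odd(g(i)) satisfies j = i or i ≺ j, and (G3) i ∈ Odd(g(i)),
where Odd(K) = {k : |N(k) ∩ K| is odd}. -/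
theorem Hn_has_gflow (n m : ℕ) (hn : 2 ≤ n) (hm : 2 * n < m) :
    ∃ prec : (Fin n ⊕ Fin (m - n)) → (Fin n ⊕ Fin (m - n)) → Prop,
      (∀ v, ¬ prec v v) ∧
      (∀ a b c, prec a b → prec b c → prec a c) ∧
      (∀ i, i ∉ Oset n m → ∀ j ∈ gfun n m i, j ∉ Iset n m) ∧
      (∀ i, i ∉ Oset n m → ∀ j ∈ gfun n m i, prec i j) ∧
      (∀ i, i ∉ Oset n m → ∀ j,
        Odd ((((HC n m)ᶜ).neighborSet j ∩ gfun n m i).ncard) → j = i ∨ prec i j) ∧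
      (∀ i, i ∉ Oset n m → Odd ((((HC n m)ᶜ).neighborSet i ∩ gfun n m i).ncard)) := by
  refine ⟨fun x y => rho n m x < rho n m y, fun v => lt_irrefl _,
    fun a b c => Nat.lt_trans, ?_, ?_, ?_, ?_⟩
  · -- g maps into I^C
    rintro i _ j ⟨a, rfl, -⟩ ⟨j', hj'⟩
    exact Sum.inr_ne_inl hj'
  · -- G1
    rintro i _ j ⟨a, rfl, h⟩
    have ha := a.isLt
    have hra : rho n m (Sum.inr a) = m - n - (a : ℕ) + 2 := rfl
    rcases h with ⟨j, rfl, -, -⟩ | ⟨j, rfl, -, -⟩ | ⟨j, rfl, -, -⟩ | ⟨b, rfl, hb, hab⟩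
    all_goals simp only [rho, hra]
    · split <;> omega
    · split <;> omega
    · split <;> omega
    · have hblt := b.isLt
      omega
  · -- G2
    intro i hi j hodd
    rcases i with j0 | c0
    · have hj0 := j0.isLt
      by_cases h1 : (j0 : ℕ) + 1 ≤ n - 2
      · obtain ⟨a, b, hva, hvb, hg⟩ := gfun_eq_small n m hn hm j0 h1
        have hab : (Sum.inr a : Fin n ⊕ Fin (m - n)) ≠ Sum.inr b := by
          simp only [ne_eq, Sum.inr.injEq, Fin.ext_iff]; omega
        rw [hg, odd_inter_pair _ _ _ hab] at hodd
        rcases j with j1 | c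
        · rcases eq_or_ne j1 j0 with rfl | hne
          · exact Or.inl rfl
          · exfalso
            have hne' : (j1 : ℕ) ≠ (j0 : ℕ) := fun h => hne (Fin.ext h)
            have hj1 := j1.isLt
            rw [inr_mem_N_inl, inr_mem_N_inl] at hodd
            omega
        · right
          have hc := c.isLt
          simp only [rho]
          split <;> omega
      · by_cases h2 : (j0 : ℕ) + 1 = n - 1
        · obtain ⟨a, b, hva, hvb, hg⟩ := gfun_eq_mid n m hn hm j0 h2
          have hab : (Sum.inr a : Fin n ⊕ Fin (m - n)) ≠ Sum.inr b := by
            simp only [ne_eq, Sum.inr.injEq, Fin.ext_iff]; omega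
          rw [hg, odd_inter_pair _ _ _ hab] at hodd
          rcases j with j1 | c
          · rcases eq_or_ne j1 j0 with rfl | hne
            · exact Or.inl rfl
            · exfalso
              have hne' : (j1 : ℕ) ≠ (j0 : ℕ) := fun h => hne (Fin.ext h)
              have hj1 := j1.isLt
              rw [inr_mem_N_inl, inr_mem_N_inl] at hodd
              omega
          · right
            have hc := c.isLt
            simp only [rho]
            split <;> omega
        · have h3 : (j0 : ℕ) + 1 = n := by omega
          obtain ⟨a, hva, hg⟩ := gfun_eq_last n m hn hm j0 h3
          rw [hg, odd_inter_single] at hodd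
          rcases j with j1 | c
          · rcases eq_or_ne j1 j0 with rfl | hne
            · exact Or.inl rfl
            · right
              have hne' : (j1 : ℕ) + 1 ≠ n := fun h => hne (Fin.ext (by omega))
              have hj1 := j1.isLt
              simp only [rho, if_pos h3, if_neg hne']
              omega
          · right
            have hc := c.isLt
            simp only [rho, if_pos h3]
            omega
    · have hc0 : n ≤ (c0 : ℕ) := by
        by_contra h
        exact hi ⟨c0, rfl, by omega⟩
      have hc0lt := c0.isLt
      obtain ⟨a, b, hva, hvb, hg⟩ := gfun_eq_inr n m hn hm c0 hc0
      have hab : (Sum.inr a : Fin n ⊕ Fin (m - n)) ≠ Sum.inr b := by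
        simp only [ne_eq, Sum.inr.injEq, Fin.ext_iff]; omega
      rw [hg, odd_inter_pair _ _ _ hab] at hodd
      rcases j with j1 | c
      · exfalso
        have hj1 := j1.isLt
        rw [inr_mem_N_inl, inr_mem_N_inl] at hodd
        omega
      · rcases eq_or_ne c c0 with rfl | hne
        · exact Or.inl rfl
        · have hne' : (c : ℕ) ≠ (c0 : ℕ) := fun h => hne (Fin.ext h)
          have hclt := c.isLt
          rcases Nat.lt_or_ge (c : ℕ) (c0 : ℕ) with hlt | hge
          · right
            simp only [rho]
            omega
          · exfalso
            rw [inr_mem_N_inr, inr_mem_N_inr] at hodd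
            omega
  · -- G3
    intro i hi
    rcases i with j0 | c0
    · have hj0 := j0.isLt
      by_cases h1 : (j0 : ℕ) + 1 ≤ n - 2
      · obtain ⟨a, b, hva, hvb, hg⟩ := gfun_eq_small n m hn hm j0 h1
        have hab : (Sum.inr a : Fin n ⊕ Fin (m - n)) ≠ Sum.inr b := by
          simp only [ne_eq, Sum.inr.injEq, Fin.ext_iff]; omega
        rw [hg, odd_inter_pair _ _ _ hab, inr_mem_N_inl, inr_mem_N_inl]
        omega
      · by_cases h2 : (j0 : ℕ) + 1 = n - 1
        · obtain ⟨a, b, hva, hvb, hg⟩ := gfun_eq_mid n m hn hm j0 h2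
          have hab : (Sum.inr a : Fin n ⊕ Fin (m - n)) ≠ Sum.inr b := by
            simp only [ne_eq, Sum.inr.injEq, Fin.ext_iff]; omega
          rw [hg, odd_inter_pair _ _ _ hab, inr_mem_N_inl, inr_mem_N_inl]
          omega
        · have h3 : (j0 : ℕ) + 1 = n := by omega
          obtain ⟨a, hva, hg⟩ := gfun_eq_last n m hn hm j0 h3
          rw [hg, odd_inter_single, inr_mem_N_inl]
          omega
    · have hc0 : n ≤ (c0 : ℕ) := by
        by_contra h
        exact hi ⟨c0, rfl, by omega⟩
      have hc0lt := c0.isLt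
      obtain ⟨a, b, hva, hvb, hg⟩ := gfun_eq_inr n m hn hm c0 hc0
      have hab : (Sum.inr a : Fin n ⊕ Fin (m - n)) ≠ Sum.inr b := by
        simp only [ne_eq, Sum.inr.injEq, Fin.ext_iff]; omega
      rw [hg, odd_inter_pair _ _ _ hab, inr_mem_N_inr, inr_mem_N_inr]
      omega
end

section
/- Consider the open graph (H_n, I, O). For any strict linear order < on O^C, if w is the <-minimal element of O^C (the first qubit to be measured), then |Q_w ∪ {w}| ≥ m − 2. In particular, any direct realisation of a measurement pattern on (H_n, I, O) requires at least m − 2 physical qubits to be present simultaneously. -/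
/-- Every vertex of `HC n m` has at most two neighbours. -/
lemma HC_nbhd_pair (n m : ℕ) (hn : 2 ≤ n) (hm : 2 * n < m) (w : Fin n ⊕ Fin (m - n)) :
    ∃ a b, (HC n m).neighborSet w ⊆ {a, b} := by
  have hmn : n < m - n := by omega
  match w with
  | Sum.inl j =>
    refine ⟨Sum.inr ⟨j, lt_trans j.isLt hmn⟩, Sum.inr ⟨m - n - 1, by omega⟩, ?_⟩
    intro v hv
    rw [SimpleGraph.mem_neighborSet, HC, SimpleGraph.fromRel_adj] at hv
    obtain ⟨hne, h | h⟩ := hv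
    · rcases h with ⟨j', k, hu, hv, hk, hj⟩ | ⟨a, b, hu, _, _, _⟩ | ⟨j', k, hu, hv, hj, hk⟩
      · obtain rfl : j' = j := by exact (Sum.inl.inj hu).symm
        subst hv
        left; simp [Fin.ext_iff, ← hk]
      · exact absurd hu (by simp)
      · subst hv
        right; simp only [Set.mem_singleton_iff, Sum.inr.injEq, Fin.ext_iff]
        omega
    · rcases h with ⟨j', k, _, hv, _, _⟩ | ⟨a, b, _, hv, _, _⟩ | ⟨j', k, _, hv, _, _⟩ <;>
        exact absurd hv (by simp)
  | Sum.inr a =>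
    by_cases hA : (a : ℕ) + 1 ≤ n - 2
    · refine ⟨Sum.inl ⟨a, by omega⟩, Sum.inl ⟨a, by omega⟩, ?_⟩
      intro v hv
      rw [SimpleGraph.mem_neighborSet, HC, SimpleGraph.fromRel_adj] at hv
      obtain ⟨hne, h | h⟩ := hv
      · rcases h with ⟨j', k, hu, _, _, _⟩ | ⟨a', b, hu, hv, hb, ha'⟩ | ⟨j', k, hu, _, _, _⟩
        · exact absurd hu (by simp)
        · obtain rfl : a' = a := (Sum.inr.inj hu).symm
          omega
        · exact absurd hu (by simp)
      · rcases h with ⟨j', k, hv, hu, hk, hj⟩ | ⟨a', b, hv, hu, hb, ha'⟩ | ⟨j', k, hv, hu, hj, hk⟩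
        · obtain rfl : k = a := (Sum.inr.inj hu).symm
          subst hv
          left; simp only [Set.mem_singleton_iff, Sum.inl.injEq, Fin.ext_iff]
          omega
        · obtain rfl : b = a := (Sum.inr.inj hu).symm
          omega
        · obtain rfl : k = a := (Sum.inr.inj hu).symm
          omega
    · by_cases hB : (a : ℕ) + 1 = m - n
      · refine ⟨Sum.inl ⟨n - 2, by omega⟩, Sum.inr ⟨(a : ℕ) - 1, by omega⟩, ?_⟩
        intro v hv
        rw [SimpleGraph.mem_neighborSet, HC, SimpleGraph.fromRel_adj] at hv
        obtain ⟨hne, h | h⟩ := hv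
        · rcases h with ⟨j', k, hu, _, _, _⟩ | ⟨a', b, hu, hv, hb, ha'⟩ | ⟨j', k, hu, _, _, _⟩
          · exact absurd hu (by simp)
          · obtain rfl : a' = a := (Sum.inr.inj hu).symm
            have := b.isLt; omega
          · exact absurd hu (by simp)
        · rcases h with ⟨j', k, hv, hu, hk, hj⟩ | ⟨a', b, hv, hu, hb, ha'⟩ | ⟨j', k, hv, hu, hj, hk⟩
          · obtain rfl : k = a := (Sum.inr.inj hu).symm
            omega
          · obtain rfl : b = a := (Sum.inr.inj hu).symm
            subst hv
            right; simp only [Set.mem_singleton_iff, Sum.inr.injEq, Fin.ext_iff]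
            omega
          · obtain rfl : k = a := (Sum.inr.inj hu).symm
            subst hv
            left; simp only [Set.mem_singleton_iff, Sum.inl.injEq, Fin.ext_iff]
            omega
      · refine ⟨Sum.inr ⟨(a : ℕ) + 1, by omega⟩, Sum.inr ⟨(a : ℕ) - 1, by omega⟩, ?_⟩
        intro v hv
        rw [SimpleGraph.mem_neighborSet, HC, SimpleGraph.fromRel_adj] at hv
        obtain ⟨hne, h | h⟩ := hv
        · rcases h with ⟨j', k, hu, _, _, _⟩ | ⟨a', b, hu, hv, hb, ha'⟩ | ⟨j', k, hu, _, _, _⟩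
          · exact absurd hu (by simp)
          · obtain rfl : a' = a := (Sum.inr.inj hu).symm
            subst hv
            left; simp only [Set.mem_singleton_iff, Sum.inr.injEq, Fin.ext_iff]
            omega
          · exact absurd hu (by simp)
        · rcases h with ⟨j', k, hv, hu, hk, hj⟩ | ⟨a', b, hv, hu, hb, ha'⟩ | ⟨j', k, hv, hu, hj, hk⟩
          · obtain rfl : k = a := (Sum.inr.inj hu).symm
            omega
          · obtain rfl : b = a := (Sum.inr.inj hu).symm
            subst hv
            right; simp only [Set.mem_singleton_iff, Sum.inr.injEq, Fin.ext_iff]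
            omega
          · obtain rfl : k = a := (Sum.inr.inj hu).symm
            omega

/-- Consider the open graph (H_n, I, O), H_n = (H^C_n)ᶜ.  For any strict
linear order < on O^C, if w is the <-minimal element of O^C (the first qubit to be
measured), then |Q_w ∪ {w}| ≥ m − 2.  Hence any direct realisation of a measurement
pattern on (H_n, I, O) requires at least m − 2 simultaneously present physical qubits. -/
theorem Hn_requires_m_sub_two_qubits (n m : ℕ) (hn : 2 ≤ n) (hm : 2 * n < m)
    (lt : (Fin n ⊕ Fin (m - n)) → (Fin n ⊕ Fin (m - n)) → Prop)
    (hlt_irr : ∀ v, v ∉ Oset n m → ¬ lt v v)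
    (hlt_trans : ∀ a b c, a ∉ Oset n m → b ∉ Oset n m → c ∉ Oset n m →
      lt a b → lt b c → lt a c)
    (hlt_total : ∀ u v, u ∉ Oset n m → v ∉ Oset n m → u ≠ v → lt u v ∨ lt v u)
    (w : Fin n ⊕ Fin (m - n)) (hw : w ∉ Oset n m)
    (hmin : ∀ v, v ∉ Oset n m → v ≠ w → lt w v) :
    m - 2 ≤ (requiredSet ((HC n m)ᶜ) (Iset n m) (Oset n m) lt w ∪ {w}).ncard := by
  have hcard : Nat.card (Fin n ⊕ Fin (m - n)) = m := by
    simp [Nat.card_eq_fintype_card, Fintype.card_sum]; omega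
  -- the measured set is empty since w is minimal
  have hM : measuredSet (Oset n m) lt w = ∅ := by
    ext v
    simp only [measuredSet, Set.mem_setOf_eq, Set.mem_empty_iff_false, iff_false, not_and]
    intro hvO hvw
    by_cases hvweq : v = w
    · exact hlt_irr w hw (hvweq ▸ hvw)
    · exact hlt_irr w hw (hlt_trans w v w hw hvO hw (hmin v hvO hvweq) hvw)
  obtain ⟨a, b, hsub⟩ := HC_nbhd_pair n m hn hm w
  have h2 : ((HC n m).neighborSet w).ncard ≤ 2 := by
    refine le_trans (Set.ncard_le_ncard hsub (Set.toFinite _)) ?_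
    refine le_trans (Set.ncard_insert_le a {b}) ?_
    simp
  have hcompl : m - 2 ≤ (((HC n m).neighborSet w)ᶜ).ncard := by
    have h := Set.ncard_add_ncard_compl ((HC n m).neighborSet w)
    omega
  refine le_trans hcompl (Set.ncard_le_ncard ?_ (Set.toFinite _))
  intro v hv
  rw [Set.mem_compl_iff, SimpleGraph.mem_neighborSet] at hv
  by_cases hvw : v = w
  · right; exact hvw
  · left
    have hvU : v ∈ unmeasuredSet (Oset n m) lt w := by
      simp only [unmeasuredSet, Set.mem_compl_iff, Set.mem_union, hM,
        Set.mem_empty_iff_false, Set.mem_singleton_iff, false_or]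
      exact hvw
    exact Or.inl (Or.inl ⟨⟨fun h => hvw (h.symm), hv⟩, hvU⟩)
end

section
/- Define f on O^C of H'_n by f(i_j) = v_j for 1 ≤ j ≤ n−2, f(i_{n−1}) = v_{m'}, f(i_n) = y, f(v_j) = v_{j−1} for n+1 ≤ j ≤ m', and f(y) = v_{n−1}. Then there exists a strict partial order ≺ on the vertex set of H'_n such that (f, ≺) is a flow on the open graph (H'_n, I, O). -/
/-- The graph H'_n, obtained from H^C_n by adjoining one new vertex y = `none`
adjacent to all m vertices of H^C_n. -/
def Hp (n m : ℕ) : SimpleGraph (Option (Fin n ⊕ Fin (m - n))) :=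
  SimpleGraph.fromRel (fun u v =>
    u = none ∨ (∃ a b, u = some a ∧ v = some b ∧ (HC n m).Adj a b))

/-- The input set I = {i_1, …, i_n} of H'_n. -/
def IsetP (n m : ℕ) : Set (Option (Fin n ⊕ Fin (m - n))) :=
  {x | ∃ j : Fin n, x = some (Sum.inl j)}

/-- The output set O = {v_1, …, v_n} of H'_n. -/
def OsetP (n m : ℕ) : Set (Option (Fin n ⊕ Fin (m - n))) :=
  {x | ∃ k : Fin (m - n), x = some (Sum.inr k) ∧ (k : ℕ) < n}

/-- The candidate flow function f on O^C of H'_n: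
f(i_j) = v_j for 1 ≤ j ≤ n−2, f(i_{n−1}) = v_{m'}, f(i_n) = y,
f(v_j) = v_{j−1} for n+1 ≤ j ≤ m', and f(y) = v_{n−1}  (1-indexed, m' = m − n).
(On the output vertices, where a flow function need not be defined, it takes the
irrelevant value `none`.) -/
def ffun (n m : ℕ) (hm : 2 * n < m) :
    Option (Fin n ⊕ Fin (m - n)) → Option (Fin n ⊕ Fin (m - n))
  | none => some (Sum.inr ⟨n - 2, by omega⟩)
  | some (Sum.inl j) =>
      if (j : ℕ) + 1 ≤ n - 2 then some (Sum.inr ⟨(j : ℕ), by have := j.isLt; omega⟩)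
      else if (j : ℕ) + 1 = n - 1 then some (Sum.inr ⟨m - n - 1, by omega⟩)
      else none
  | some (Sum.inr b) =>
      if n ≤ (b : ℕ) then some (Sum.inr ⟨(b : ℕ) - 1, by have := b.isLt; omega⟩)
      else none

def rkk (n m : ℕ) : Option (Fin n ⊕ Fin (m - n)) → ℕ
  | none => m - 2*n + 3
  | some (Sum.inl j) => if (j : ℕ) + 1 = n then 0 else 1
  | some (Sum.inr b) => if n - 1 ≤ (b : ℕ) then m - n - (b : ℕ) + 1 else m - 2*n + 4

lemma hc_adj_inr {n m : ℕ} {c : Fin (m-n)} {x} (h : (HC n m).Adj (Sum.inr c) x) :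
    (∃ j : Fin n, x = Sum.inl j ∧ (((j:ℕ) = (c:ℕ) ∧ (j:ℕ)+1 ≤ n-2) ∨ ((j:ℕ)+1 = n-1 ∧ (c:ℕ)+1 = m-n))) ∨
    (∃ d : Fin (m-n), x = Sum.inr d ∧ (((d:ℕ) = (c:ℕ)+1 ∧ n-1 ≤ (c:ℕ)) ∨ ((c:ℕ) = (d:ℕ)+1 ∧ n-1 ≤ (d:ℕ)))) := by
  rw [HC, SimpleGraph.fromRel_adj] at h
  obtain ⟨hne, h | h⟩ := h <;>
    rcases h with ⟨j,k,h1,h2,h3,h4⟩ | ⟨a,b,h1,h2,h3,h4⟩ | ⟨j,k,h1,h2,h3,h4⟩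
  · exact absurd h1 (by simp)
  · obtain ⟨rfl⟩ := Sum.inr.inj h1
    exact Or.inr ⟨b, h2, Or.inl ⟨h3, h4⟩⟩
  · exact absurd h1 (by simp)
  · obtain ⟨rfl⟩ := Sum.inr.inj h2
    exact Or.inl ⟨j, h1, Or.inl ⟨h3, h4⟩⟩
  · obtain ⟨rfl⟩ := Sum.inr.inj h2
    exact Or.inr ⟨a, h1, Or.inr ⟨h3, h4⟩⟩
  · obtain ⟨rfl⟩ := Sum.inr.inj h2
    exact Or.inl ⟨j, h1, Or.inr ⟨h3, h4⟩⟩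

lemma hp_adj_iff {n m : ℕ} {u v} : (Hp n m).Adj u v ↔ u ≠ v ∧
    ((u = none ∨ ∃ a b, u = some a ∧ v = some b ∧ (HC n m).Adj a b) ∨
     (v = none ∨ ∃ a b, v = some a ∧ u = some b ∧ (HC n m).Adj a b)) := by
  rw [Hp, SimpleGraph.fromRel_adj]

/-- With f as above, there exists a strict partial order ≺ on the vertex
set of H'_n such that (f, ≺) is a flow on the open graph (H'_n, I, O): f maps O^C into
I^C and for every i ∈ O^C, (F1) i ≺ f(i), (F2) every j ∈ N(f(i)) satisfies j = i or
i ≺ j, and (F3) i ∈ N(f(i)). -/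
theorem Hp_has_flow (n m : ℕ) (hn : 2 ≤ n) (hm : 2 * n < m) :
    ∃ prec : Option (Fin n ⊕ Fin (m - n)) → Option (Fin n ⊕ Fin (m - n)) → Prop,
      (∀ v, ¬ prec v v) ∧
      (∀ a b c, prec a b → prec b c → prec a c) ∧
      (∀ i, i ∉ OsetP n m → ffun n m hm i ∉ IsetP n m) ∧
      (∀ i, i ∉ OsetP n m → prec i (ffun n m hm i)) ∧
      (∀ i, i ∉ OsetP n m → ∀ j, (Hp n m).Adj (ffun n m hm i) j → j = i ∨ prec i j) ∧
      (∀ i, i ∉ OsetP n m → (Hp n m).Adj i (ffun n m hm i)) := by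
  have rk_pos : ∀ x, x ≠ some (Sum.inl ⟨n-1, by omega⟩) → 0 < rkk n m x := by
    rintro (_ | (j | b)) hx
    · simp [rkk]
    · simp only [rkk]
      rw [if_neg]
      · omega
      · intro h
        exact hx (by congr 2; exact Fin.ext (by simp only [Fin.val_mk]; omega))
    · simp only [rkk]; split_ifs <;> omega
  refine ⟨fun a b => rkk n m a < rkk n m b, fun v => lt_irrefl _,
    fun a b c hab hbc => lt_trans hab hbc, ?_, ?_, ?_, ?_⟩
  · -- f maps O^C into I^C
    rintro i hi ⟨j, hj⟩
    rcases i with _ | (k | b) <;> simp only [ffun] at hj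
    · exact absurd hj (by simp)
    · split_ifs at hj <;> simp_all
    · split_ifs at hj <;> simp_all
  · -- F1
    rintro (_ | (j | b)) hi
    · simp only [ffun, rkk, Fin.val_mk]
      rw [if_neg (by omega)]
      omega
    · have hj := j.isLt
      simp only [ffun]
      split_ifs with h1 h2 <;> simp only [rkk, Fin.val_mk] <;> split_ifs <;> omega
    · have hb := b.isLt
      have hbn : n ≤ (b : ℕ) := by
        by_contra h
        exact hi ⟨b, rfl, by omega⟩
      simp only [ffun, if_pos hbn, rkk, Fin.val_mk]
      split_ifs <;> omega
  · -- F2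
    rintro i hi j hadj
    rcases i with _ | (w | b)
    · -- i = none, f i = some (inr ⟨n-2⟩); only neighbour is none = i
      simp only [ffun] at hadj
      rw [hp_adj_iff] at hadj
      obtain ⟨hne, h | h⟩ := hadj
      · rcases h with h | ⟨a, b, ha, hb, hadj⟩
        · exact absurd h (by simp)
        · obtain rfl := Option.some.inj ha
          rcases hc_adj_inr hadj with ⟨j', hj', hc⟩ | ⟨d, hd, hc⟩ <;>
            simp only [Fin.val_mk] at hc <;> omega
      · rcases h with h | ⟨a, b, ha, hb, hadj⟩
        · exact Or.inl h
        · obtain rfl := Option.some.inj hb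
          have := (HC n m).adj_symm hadj
          rcases hc_adj_inr this with ⟨j', hj', hc⟩ | ⟨d, hd, hc⟩ <;>
            simp only [Fin.val_mk] at hc <;> omega
    · -- i = some (inl w)
      have hw := w.isLt
      simp only [ffun] at hadj
      split_ifs at hadj with h1 h2
      · -- f i = inr w, neighbours: none, inl w
        rw [hp_adj_iff] at hadj
        obtain ⟨hne, h | h⟩ := hadj
        · rcases h with h | ⟨a, b, ha, hb, hadj'⟩
          · exact absurd h (by simp)
          · obtain rfl := Option.some.inj ha
            rcases hc_adj_inr hadj' with ⟨j', hj', hc⟩ | ⟨d, hd, hc⟩ <;>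
              simp only [Fin.val_mk] at hc
            · -- j = some (inl j'), j' = w
              subst hb hj'
              left
              congr 2
              exact Fin.ext (by omega)
            · omega
        · rcases h with h | ⟨a, b, ha, hb, hadj'⟩
          · subst h
            right
            simp only [rkk, Fin.val_mk]
            split_ifs <;> omega
          · obtain rfl := Option.some.inj hb
            have := (HC n m).adj_symm hadj'
            rcases hc_adj_inr this with ⟨j', hj', hc⟩ | ⟨d, hd, hc⟩ <;>
              simp only [Fin.val_mk] at hc
            · subst ha hj'
              left
              congr 2
              exact Fin.ext (by omega)
            · omega
      · -- f i = inr ⟨m-n-1⟩, neighbours: none, inl w, inr ⟨m-n-2⟩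
        rw [hp_adj_iff] at hadj
        obtain ⟨hne, h | h⟩ := hadj
        · rcases h with h | ⟨a, b, ha, hb, hadj'⟩
          · exact absurd h (by simp)
          · obtain rfl := Option.some.inj ha
            rcases hc_adj_inr hadj' with ⟨j', hj', hc⟩ | ⟨d, hd, hc⟩ <;>
              simp only [Fin.val_mk] at hc
            · subst hb hj'
              rcases hc with ⟨hc1, hc2⟩ | ⟨hc1, hc2⟩
              · omega
              · left; congr 2; exact Fin.ext (by omega)
            · -- d = m-n-2
              subst hb hd
              rcases hc with ⟨hc1, hc2⟩ | ⟨hc1, hc2⟩ <;>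
                (right; simp only [rkk, Fin.val_mk]; split_ifs <;> omega)
        · rcases h with h | ⟨a, b, ha, hb, hadj'⟩
          · subst h
            right
            simp only [rkk, Fin.val_mk]
            split_ifs <;> omega
          · obtain rfl := Option.some.inj hb
            have := (HC n m).adj_symm hadj'
            rcases hc_adj_inr this with ⟨j', hj', hc⟩ | ⟨d, hd, hc⟩ <;>
              simp only [Fin.val_mk] at hc
            · subst ha hj'
              rcases hc with ⟨hc1, hc2⟩ | ⟨hc1, hc2⟩
              · omega
              · left; congr 2; exact Fin.ext (by omega)
            · subst ha hd
              rcases hc with ⟨hc1, hc2⟩ | ⟨hc1, hc2⟩ <;>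
                (right; simp only [rkk, Fin.val_mk]; split_ifs <;> omega)
      · -- f i = none : i = inl (n-1), minimal
        rw [hp_adj_iff] at hadj
        have hwv : (w : ℕ) + 1 = n := by omega
        obtain ⟨hne, h | h⟩ := hadj
        · rcases h with h | ⟨a, b, ha, hb, hadj'⟩
          · -- j adjacent to none: any j ≠ none
            by_cases hji : j = some (Sum.inl w)
            · exact Or.inl hji
            · right
              simp only [rkk, Fin.val_mk, if_pos hwv]
              refine rk_pos j ?_
              intro hj
              apply hji
              rw [hj]
              congr 2
              exact Fin.ext (by simp only [Fin.val_mk]; omega)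
          · exact absurd ha (by simp)
        · rcases h with h | ⟨a, b, ha, hb, hadj'⟩
          · exact absurd (hne h.symm) (by simp)
          · exact absurd hb (by simp)
    · -- i = some (inr b), b ≥ n
      have hb := b.isLt
      have hbn : n ≤ (b : ℕ) := by
        by_contra h
        exact hi ⟨b, rfl, by omega⟩
      simp only [ffun, if_pos hbn] at hadj
      rw [hp_adj_iff] at hadj
      have key : ∀ x, j = some x → (HC n m).Adj (Sum.inr ⟨(b:ℕ)-1, by omega⟩) x → _root_.Or (j = some (Sum.inr b)) (rkk n m (some (Sum.inr b)) < rkk n m j) := by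
        intro x hx hadj'
        rcases hc_adj_inr hadj' with ⟨j', hj', hc⟩ | ⟨d, hd, hc⟩ <;>
          simp only [Fin.val_mk] at hc
        · omega
        · subst hx hd
          rcases hc with ⟨hc1, hc2⟩ | ⟨hc1, hc2⟩
          · -- d = b
            left; congr 2; exact Fin.ext (by omega)
          · -- d = b - 2
            right
            simp only [rkk, Fin.val_mk]
            split_ifs <;> omega
      obtain ⟨hne, h | h⟩ := hadj
      · rcases h with h | ⟨a, c, ha, hc, hadj'⟩
        · exact absurd h (by simp)
        · obtain rfl := Option.some.inj ha
          exact key c hc hadj'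
      · rcases h with h | ⟨a, c, ha, hc, hadj'⟩
        · subst h
          right
          simp only [rkk, Fin.val_mk]
          split_ifs <;> omega
        · obtain rfl := Option.some.inj hc
          exact key a ha ((HC n m).adj_symm hadj')
  · -- F3
    rintro (_ | (j | b)) hi
    · simp only [ffun]
      rw [hp_adj_iff]
      exact ⟨by simp, Or.inl (Or.inl rfl)⟩
    · have hj := j.isLt
      simp only [ffun]
      split_ifs with h1 h2
      · rw [hp_adj_iff]
        refine ⟨by simp, Or.inl (Or.inr ⟨Sum.inl j, _, rfl, rfl, ?_⟩)⟩
        rw [HC, SimpleGraph.fromRel_adj]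
        exact ⟨by simp, Or.inl (Or.inl ⟨j, _, rfl, rfl, rfl, h1⟩)⟩
      · rw [hp_adj_iff]
        refine ⟨by simp, Or.inl (Or.inr ⟨Sum.inl j, _, rfl, rfl, ?_⟩)⟩
        rw [HC, SimpleGraph.fromRel_adj]
        refine ⟨by simp, Or.inl (Or.inr (Or.inr ⟨j, _, rfl, rfl, h2, by simp; omega⟩))⟩
      · rw [hp_adj_iff]
        exact ⟨by simp, Or.inr (Or.inl rfl)⟩
    · have hb := b.isLt
      have hbn : n ≤ (b : ℕ) := by
        by_contra h
        exact hi ⟨b, rfl, by omega⟩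
      simp only [ffun, if_pos hbn]
      rw [hp_adj_iff]
      refine ⟨?_, Or.inl (Or.inr ⟨Sum.inr b, _, rfl, rfl, ?_⟩)⟩
      · simp only [ne_eq, Option.some.injEq, Sum.inr.injEq]
        intro h
        have := congrArg Fin.val h
        simp at this
        omega
      · rw [HC, SimpleGraph.fromRel_adj]
        refine ⟨?_, Or.inr (Or.inr (Or.inl ⟨_, b, rfl, rfl, by simp only [Fin.val_mk]; omega, by simp only [Fin.val_mk]; omega⟩))⟩
        simp only [ne_eq, Sum.inr.injEq]
        intro h
        have := congrArg Fin.val h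
        simp at this
        omega
end
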